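/- Let d ∈ ℕ, let f : ℝ^d → ℝ be convex, and let C ≥ 0. Assume that for every x ∈ ℝ^d and every ε > 0 there exists a twice continuously differentiable function g : ℝ^d → ℝ such that g(y) ≥ f(y) for all y ∈ ℝ^d, g(x) ≤ f(x) + ε, and the second derivatives of g are uniformly bounded in the sense that |y · (Hess g(z)) y| ≤ C|y|² for all z, y ∈ ℝ^d. Then f is differentiable at every point of ℝ^d, and consequently f is continuously differentiable. -/

import Mathlib

open Set Filter Asymptotics

private lemma taylor_upper {d : ℕ} (g : EuclideanSpace ℝ (Fin d) → ℝ) (hg : ContDiff ℝ 2 g)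
    {C : ℝ}
    (hH : ∀ z y : EuclideanSpace ℝ (Fin d), |fderiv ℝ (fderiv ℝ g) z y y| ≤ C * ‖y‖ ^ 2)
    (x y : EuclideanSpace ℝ (Fin d)) :
    g (x + y) ≤ g x + fderiv ℝ g x y + C / 2 * ‖y‖ ^ 2 := by
  have hg1 : Differentiable ℝ g := hg.differentiable (by norm_num)
  have hg2 : Differentiable ℝ (fderiv ℝ g) :=
    (hg.fderiv_right (m := 1) (by norm_num)).differentiable (by norm_num)
  set L : ℝ → EuclideanSpace ℝ (Fin d) := fun t => x + t • y with hL
  have hLd : ∀ t : ℝ, HasDerivAt L y t := by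
    intro t
    have h := HasDerivAt.const_add x ((hasDerivAt_id t).smul_const y)
    rw [one_smul] at h
    exact h
  have hL0 : L 0 = x := by simp [hL]
  have hv : ∀ t : ℝ, HasDerivAt (fun t => fderiv ℝ g (L t) y)
      (fderiv ℝ (fderiv ℝ g) (L t) y y) t := by
    intro t
    have h1 : HasDerivAt (fun t => fderiv ℝ g (L t)) (fderiv ℝ (fderiv ℝ g) (L t) y) t :=
      (hg2 (L t)).hasFDerivAt.comp_hasDerivAt t (hLd t)
    simpa using h1.clm_apply (hasDerivAt_const t y)
  set v : ℝ → ℝ := fun t => fderiv ℝ g (L t) y - C * t * ‖y‖ ^ 2 with hvdef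
  have hvd : ∀ t : ℝ, HasDerivAt v (fderiv ℝ (fderiv ℝ g) (L t) y y - C * ‖y‖ ^ 2) t := by
    intro t
    have h2 : HasDerivAt (fun t : ℝ => C * t * ‖y‖ ^ 2) (C * ‖y‖ ^ 2) t := by
      simpa [mul_comm, mul_assoc, mul_left_comm] using
        ((hasDerivAt_id t).const_mul C).mul_const (‖y‖ ^ 2)
    exact (hv t).sub h2
  have hvanti : AntitoneOn v (Icc (0:ℝ) 1) := by
    apply antitoneOn_of_deriv_nonpos (convex_Icc 0 1)
    · exact fun t _ => ((hvd t).continuousAt).continuousWithinAt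
    · exact fun t _ => ((hvd t).differentiableAt).differentiableWithinAt
    · intro t _
      rw [(hvd t).deriv]
      linarith [(abs_le.mp (hH (L t) y)).2]
  set u : ℝ → ℝ := fun t => g (L t) - t * fderiv ℝ g x y - C / 2 * t ^ 2 * ‖y‖ ^ 2 with hudef
  have hud : ∀ t : ℝ, HasDerivAt u (fderiv ℝ g (L t) y - fderiv ℝ g x y - C * t * ‖y‖ ^ 2) t := by
    intro t
    have h1 : HasDerivAt (fun t => g (L t)) (fderiv ℝ g (L t) y) t :=
      (hg1 (L t)).hasFDerivAt.comp_hasDerivAt t (hLd t)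
    have h2 : HasDerivAt (fun t : ℝ => t * fderiv ℝ g x y) (fderiv ℝ g x y) t := by
      simpa using (hasDerivAt_id t).mul_const (fderiv ℝ g x y)
    have h3 : HasDerivAt (fun t : ℝ => C / 2 * t ^ 2 * ‖y‖ ^ 2) (C * t * ‖y‖ ^ 2) t := by
      have := ((hasDerivAt_pow 2 t).const_mul (C / 2)).mul_const (‖y‖ ^ 2)
      exact this.congr_deriv (by push_cast; ring)
    exact (h1.sub h2).sub h3
  have huanti : AntitoneOn u (Icc (0:ℝ) 1) := by
    apply antitoneOn_of_deriv_nonpos (convex_Icc 0 1)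
    · exact fun t _ => ((hud t).continuousAt).continuousWithinAt
    · exact fun t _ => ((hud t).differentiableAt).differentiableWithinAt
    · intro t ht
      rw [(hud t).deriv]
      rw [interior_Icc] at ht
      have hvt : v t ≤ v 0 := hvanti (by constructor <;> norm_num)
        ⟨le_of_lt ht.1, le_of_lt ht.2⟩ (le_of_lt ht.1)
      simp only [hvdef, hL0] at hvt
      simp only [mul_zero, zero_mul, sub_zero] at hvt
      linarith
  have := huanti (by constructor <;> norm_num) (by constructor <;> norm_num) (zero_le_one)
  simp only [hudef, hL0] at this
  simp only [one_smul, hL] at this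
  norm_num at this
  linarith

private lemma opnorm_quad {d : ℕ} (T : EuclideanSpace ℝ (Fin d) →L[ℝ] ℝ) {a b t : ℝ}
    (ha : 0 ≤ a) (hb : 0 ≤ b) (ht : 0 < t)
    (h : ∀ y, |T y| ≤ a + b * ‖y‖ ^ 2) : ‖T‖ ≤ a / t + b * t := by
  apply T.opNorm_le_bound (by positivity)
  intro y
  rw [Real.norm_eq_abs]
  rcases eq_or_ne y 0 with rfl | hy
  · simp
  · have hs : 0 < ‖y‖ := norm_pos_iff.mpr hy
    have h1 := h ((t / ‖y‖) • y)
    rw [map_smul, smul_eq_mul, abs_mul, abs_of_pos (div_pos ht hs)] at h1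
    have h2 : ‖(t / ‖y‖) • y‖ = t := by
      rw [norm_smul, Real.norm_eq_abs, abs_of_pos (div_pos ht hs)]
      field_simp
    rw [h2] at h1
    set s := |T y| with hsdef
    have h3 : t * s ≤ (a + b * t ^ 2) * ‖y‖ := by
      rw [div_mul_eq_mul_div, div_le_iff₀ hs] at h1
      linarith [h1]
    have hgoal : s * t ≤ (a / t + b * t) * ‖y‖ * t := by
      have hat : a / t * t = a := div_mul_cancel₀ a ht.ne'
      have he : (a / t + b * t) * ‖y‖ * t = (a + b * t ^ 2) * ‖y‖ := by
        calc (a / t + b * t) * ‖y‖ * t = (a / t * t) * ‖y‖ + b * t ^ 2 * ‖y‖ := by ring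
          _ = (a + b * t ^ 2) * ‖y‖ := by rw [hat]; ring
      rw [he]
      linarith [h3, mul_comm t s]
    exact le_of_mul_le_mul_right hgoal ht

set_option maxHeartbeats 2000000 in
/-- A convex function `f : ℝ^d → ℝ` which at every point admits
`ε`-close-from-above `C²` upper bounds with uniformly bounded Hessians is differentiable
everywhere, hence continuously differentiable. -/
theorem stmt6 {d : ℕ} (f : EuclideanSpace ℝ (Fin d) → ℝ)
    (hf : ConvexOn ℝ Set.univ f) (C : ℝ) (hC : 0 ≤ C)
    (happrox : ∀ x : EuclideanSpace ℝ (Fin d), ∀ ε : ℝ, 0 < ε →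
      ∃ g : EuclideanSpace ℝ (Fin d) → ℝ, ContDiff ℝ 2 g ∧
        (∀ y, f y ≤ g y) ∧ g x ≤ f x + ε ∧
        (∀ z y : EuclideanSpace ℝ (Fin d), |fderiv ℝ (fderiv ℝ g) z y y| ≤ C * ‖y‖ ^ 2)) :
    (∀ x, DifferentiableAt ℝ f x) ∧ ContDiff ℝ 1 f := by
  -- Step 1: ε-approximate linear bounds
  have keyA : ∀ x : EuclideanSpace ℝ (Fin d), ∀ ε : ℝ, 0 < ε →
      ∃ p : EuclideanSpace ℝ (Fin d) →L[ℝ] ℝ,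
        ∀ y, |f (x + y) - f x - p y| ≤ ε + C / 2 * ‖y‖ ^ 2 := by
    intro x ε hε
    obtain ⟨g, hg, hfg, hgx, hH⟩ := happrox x ε hε
    refine ⟨fderiv ℝ g x, fun y => ?_⟩
    have hu : ∀ z, f (x + z) - f x - fderiv ℝ g x z ≤ ε + C / 2 * ‖z‖ ^ 2 := by
      intro z
      have ht := taylor_upper g hg hH x z
      have h1 := hfg (x + z)
      have h2 := hfg x
      linarith
    have hmid : f x ≤ (f (x + y) + f (x - y)) / 2 := by
      have h := hf.2 (Set.mem_univ (x + y)) (Set.mem_univ (x - y))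
        (by norm_num : (0:ℝ) ≤ 1/2) (by norm_num : (0:ℝ) ≤ 1/2) (by norm_num)
      have he : (1/2 : ℝ) • (x + y) + (1/2 : ℝ) • (x - y) = x := by
        module
      rw [he] at h
      simp only [smul_eq_mul] at h
      linarith [h]
    have hl := hu (-y)
    rw [map_neg] at hl
    have hny : ‖(-y : EuclideanSpace ℝ (Fin d))‖ = ‖y‖ := norm_neg y
    rw [hny] at hl
    have hxy : x + -y = x - y := by abel
    rw [hxy] at hl
    rw [abs_le]
    constructor
    · linarith
    · linarith [hu y]
  -- Step 2: pass to the limit ε → 0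
  have keyB : ∀ x : EuclideanSpace ℝ (Fin d),
      ∃ p : EuclideanSpace ℝ (Fin d) →L[ℝ] ℝ,
        ∀ y, |f (x + y) - f x - p y| ≤ C / 2 * ‖y‖ ^ 2 := by
    intro x
    have hpos : ∀ n : ℕ, (0:ℝ) < 1 / (n + 1) := fun n => by positivity
    choose q hq using fun n : ℕ => keyA x (1 / (n + 1)) (hpos n)
    have hdiff : ∀ n m : ℕ, ∀ y, |(q n - q m) y| ≤ (1/(n+1) + 1/(m+1)) + C * ‖y‖ ^ 2 := by
      intro n m y
      have h1 := hq n y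
      have h2 := hq m y
      rw [ContinuousLinearMap.sub_apply]
      have : (q n) y - (q m) y = (f (x + y) - f x - q m y) - (f (x + y) - f x - q n y) := by ring
      rw [this]
      calc |(f (x + y) - f x - q m y) - (f (x + y) - f x - q n y)|
          ≤ |f (x + y) - f x - q m y| + |f (x + y) - f x - q n y| := abs_sub _ _
        _ ≤ (1/(m+1) + C/2 * ‖y‖^2) + (1/(n+1) + C/2 * ‖y‖^2) := add_le_add h2 h1
        _ = (1/(n+1) + 1/(m+1)) + C * ‖y‖ ^ 2 := by ring
    have hcauchy : CauchySeq q := by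
      apply cauchySeq_of_le_tendsto_0 (fun N : ℕ => (2 + C) * Real.sqrt (1 / (N + 1)))
      · intro n m N hn hm
        rw [dist_eq_norm]
        set t := Real.sqrt (1 / (N + 1)) with htdef
        have ht : 0 < t := Real.sqrt_pos.mpr (hpos N)
        have hb := opnorm_quad (q n - q m)
          (a := 1/(n+1) + 1/(m+1)) (b := C)
          (by positivity) hC ht (hdiff n m)
        have hle : (1/(n+1) + 1/(m+1) : ℝ) ≤ 2 * (1 / (N + 1)) := by
          have h1 : (1 : ℝ)/(n+1) ≤ 1/(N+1) := by
            apply one_div_le_one_div_of_le (by positivity)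
            exact_mod_cast Nat.succ_le_succ hn
          have h2 : (1 : ℝ)/(m+1) ≤ 1/(N+1) := by
            apply one_div_le_one_div_of_le (by positivity)
            exact_mod_cast Nat.succ_le_succ hm
          linarith
        have hts : t * t = 1 / (N + 1) := Real.mul_self_sqrt (le_of_lt (hpos N))
        calc ‖q n - q m‖ ≤ (1/(n+1) + 1/(m+1)) / t + C * t := hb
          _ ≤ 2 * (1 / (N + 1)) / t + C * t := by gcongr
          _ = 2 * t + C * t := by
              rw [← hts]; field_simp
          _ = (2 + C) * t := by ring
      · have h0 : Filter.Tendsto (fun N : ℕ => (1 : ℝ) / (N + 1)) atTop (nhds 0) :=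
          tendsto_one_div_add_atTop_nhds_zero_nat
        have h1 : Filter.Tendsto (fun N : ℕ => Real.sqrt (1 / (N + 1))) atTop (nhds (Real.sqrt 0)) :=
          (Real.continuous_sqrt.tendsto 0).comp h0
        rw [Real.sqrt_zero] at h1
        simpa using h1.const_mul (2 + C)
    obtain ⟨p, hp⟩ := cauchySeq_tendsto_of_complete hcauchy
    refine ⟨p, fun y => ?_⟩
    have happ : Filter.Tendsto (fun n => (q n) y) atTop (nhds (p y)) := by
      have hcont : Continuous fun T : EuclideanSpace ℝ (Fin d) →L[ℝ] ℝ => T y :=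
        (ContinuousLinearMap.apply ℝ ℝ y).continuous
      exact (hcont.tendsto p).comp hp
    have hlim : Filter.Tendsto (fun n => |f (x + y) - f x - (q n) y|) atTop
        (nhds (|f (x + y) - f x - p y|)) := by
      have : Filter.Tendsto (fun n => f (x + y) - f x - (q n) y) atTop
          (nhds (f (x + y) - f x - p y)) := (tendsto_const_nhds.sub happ)
      exact this.abs
    have hrhs : Filter.Tendsto (fun n : ℕ => 1/(n+1) + C / 2 * ‖y‖ ^ 2) atTop
        (nhds (C / 2 * ‖y‖ ^ 2)) := by
      have := tendsto_one_div_add_atTop_nhds_zero_nat.add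
        (tendsto_const_nhds (x := C / 2 * ‖y‖ ^ 2))
      simpa using this
    exact le_of_tendsto_of_tendsto' hlim hrhs (fun n => hq n y)
  -- Step 3: differentiability
  have hderiv : ∀ (x : EuclideanSpace ℝ (Fin d)) (p : EuclideanSpace ℝ (Fin d) →L[ℝ] ℝ),
      (∀ y, |f (x + y) - f x - p y| ≤ C / 2 * ‖y‖ ^ 2) → HasFDerivAt f p x := by
    intro x p hp
    rw [hasFDerivAt_iff_isLittleO_nhds_zero]
    rw [Asymptotics.isLittleO_iff]
    intro c hc
    have hδ : 0 < 2 * c / (C + 1) := by positivity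
    rw [Metric.eventually_nhds_iff]
    refine ⟨2 * c / (C + 1), hδ, fun {h} hh => ?_⟩
    rw [dist_zero_right] at hh
    have h1 := hp h
    have h2 : C / 2 * ‖h‖ ^ 2 ≤ c * ‖h‖ := by
      have hn : 0 ≤ ‖h‖ := norm_nonneg h
      have : ‖h‖ * (C + 1) ≤ 2 * c :=
        le_of_lt ((lt_div_iff₀ (by positivity : (0:ℝ) < C + 1)).mp hh)
      nlinarith
    calc ‖f (x + h) - f x - p h‖ = |f (x + h) - f x - p h| := Real.norm_eq_abs _
      _ ≤ C / 2 * ‖h‖ ^ 2 := h1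
      _ ≤ c * ‖h‖ := h2
  have hdiffAt : ∀ x, DifferentiableAt ℝ f x := by
    intro x
    obtain ⟨p, hp⟩ := keyB x
    exact (hderiv x p hp).differentiableAt
  refine ⟨hdiffAt, ?_⟩
  -- Step 4: the derivative satisfies the quadratic bound
  have keyD : ∀ x, ∀ y, |f (x + y) - f x - (fderiv ℝ f x) y| ≤ C / 2 * ‖y‖ ^ 2 := by
    intro x
    obtain ⟨p, hp⟩ := keyB x
    have : fderiv ℝ f x = p := (hderiv x p hp).fderiv
    rw [this]
    exact hp
  -- Step 5: Lipschitz continuity of the derivative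
  have hlip : ∀ x x' : EuclideanSpace ℝ (Fin d),
      ‖fderiv ℝ f x' - fderiv ℝ f x‖ ≤ 3 * C * ‖x' - x‖ := by
    intro x x'
    set r := ‖x' - x‖ with hrdef
    have hr : 0 ≤ r := norm_nonneg _
    set T := fderiv ℝ f x' - fderiv ℝ f x with hT
    apply T.opNorm_le_bound (by positivity)
    intro y
    rw [Real.norm_eq_abs]
    rcases eq_or_ne y 0 with rfl | hy
    · simp
    rcases eq_or_lt_of_le hr with hr0 | hr0
    · have hxx : x' = x := by
        rw [← sub_eq_zero]
        exact norm_eq_zero.mp hr0.symm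
      simp [hT, hxx]
      positivity
    have hsy : 0 < ‖y‖ := norm_pos_iff.mpr hy
    have main : ∀ z : EuclideanSpace ℝ (Fin d), ‖z‖ = r → |T z| ≤ 3 * C * r ^ 2 := by
      intro z hz
      have hA := keyD x' z
      have hB := keyD x (x' - x + z)
      have hE := keyD x (x' - x)
      have e1 : x + (x' - x + z) = x' + z := by abel
      have e2 : x + (x' - x) = x' := by abel
      rw [e1] at hB
      rw [e2] at hE
      rw [hz] at hA
      rw [← hrdef] at hE
      have hBz : ‖x' - x + z‖ ^ 2 ≤ (2 * r) ^ 2 := by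
        have h2r : ‖x' - x + z‖ ≤ 2 * r := by
          have := norm_add_le (x' - x) z
          rw [hz, ← hrdef] at this
          linarith
        exact pow_le_pow_left₀ (norm_nonneg _) h2r 2
      have hB' : C / 2 * ‖x' - x + z‖ ^ 2 ≤ C / 2 * (2 * r) ^ 2 :=
        mul_le_mul_of_nonneg_left hBz (by positivity)
      have hid : T z =
          (f (x' + z) - f x - (fderiv ℝ f x) (x' - x + z))
          - (f (x' + z) - f x' - (fderiv ℝ f x') z)
          - (f x' - f x - (fderiv ℝ f x) (x' - x)) := by
        rw [hT, ContinuousLinearMap.sub_apply, map_add]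
        ring
      rw [hid]
      have t1 := abs_le.mp hA
      have t2 := abs_le.mp hB
      have t3 := abs_le.mp hE
      rw [abs_le]
      constructor <;>
        linarith [t1.1, t1.2, t2.1, t2.2, t3.1, t3.2, hB']
    have hz : ‖(r / ‖y‖) • y‖ = r := by
      rw [norm_smul, Real.norm_eq_abs, abs_of_pos (div_pos hr0 hsy)]
      field_simp
    have hm := main ((r / ‖y‖) • y) hz
    rw [map_smul, smul_eq_mul, abs_mul, abs_of_pos (div_pos hr0 hsy)] at hm
    set s := |T y| with hsdef
    have h3 : r * s ≤ 3 * C * r ^ 2 * ‖y‖ := by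
      rw [div_mul_eq_mul_div, div_le_iff₀ hsy] at hm
      linarith [hm]
    have h4 : s * r ≤ 3 * C * r * ‖y‖ * r := by nlinarith [h3]
    exact le_of_mul_le_mul_right h4 hr0
  have hcont : Continuous (fderiv ℝ f) := by
    have : LipschitzWith ⟨3 * C, by positivity⟩ (fderiv ℝ f) := by
      apply LipschitzWith.of_dist_le_mul
      intro x' x
      rw [dist_eq_norm, dist_eq_norm]
      exact hlip x x'
    exact this.continuous
  exact contDiff_one_iff_fderiv.mpr ⟨hdiffAt, hcont⟩
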